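/- Let R be an integral domain and M a finitely generated torsion-free R-module. If {P_i}_{i∈I} is an infinite collection of prime ideals of R with ⋂_{i∈I} P_i = {0}, then ⋂_{i∈I} P_i·M = {0}. -/

import Mathlib

/-- paper, Lemma `lemma_tor_free_means_finitely_divisible`.
Let `R` be an integral domain and `M` a finitely generated torsion-free `R`-module
(torsion-freeness is expressed by `NoZeroSMulDivisors R M`). If `{P i}_{i ∈ I}` is an
infinite collection of prime ideals of `R` with `⋂ i, P i = 0`, then `⋂ i, P i • M = 0`. -/
theorem interiteration_of_prime_smul_eq_bot
    (R : Type*) [CommRing R] [IsDomain R]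
    (M : Type*) [AddCommGroup M] [Module R M] [Module.Finite R M]
    [NoZeroSMulDivisors R M]
    (I : Type*) [Infinite I] (P : I → Ideal R) (hP : ∀ i, (P i).IsPrime)
    (hPint : (⨅ i, P i) = ⊥) :
    (⨅ i, (P i) • (⊤ : Submodule R M)) = ⊥ := by
  classical
  obtain ⟨n, v, hv⟩ := Module.Finite.exists_fin (R := R) (M := M)
  obtain ⟨s, hli, hrel⟩ := exists_maximal_linearIndepOn R v
  set F : Submodule R M := Submodule.span R (Set.range fun x : s => v x) with hFdef
  have himg : v '' s = Set.range fun x : s => v x := Set.image_eq_range v s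
  -- choose scalars
  have hrel' : ∀ i : Fin n, ∃ a : R, a ≠ 0 ∧ a • v i ∈ F := by
    intro i
    by_cases hi : i ∈ s
    · refine ⟨1, one_ne_zero, ?_⟩
      have hmem : v i ∈ F := Submodule.subset_span ⟨⟨i, hi⟩, rfl⟩
      simpa using hmem
    · obtain ⟨a, ha, hma⟩ := hrel i hi
      exact ⟨a, ha, by rwa [hFdef, ← himg]⟩
  choose a ha hma using hrel'
  set c : R := ∏ i, a i with hcdef
  have hc : c ≠ 0 := Finset.prod_ne_zero_iff.2 fun i _ => ha i
  have hcv : ∀ i, c • v i ∈ F := by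
    intro i
    have : c = (∏ j ∈ Finset.univ.erase i, a j) * a i := by
      rw [hcdef, ← Finset.prod_erase_mul Finset.univ a (Finset.mem_univ i)]
    rw [this, mul_smul]
    exact F.smul_mem _ (hma i)
  have hcM : ∀ x : M, c • x ∈ F := by
    intro x
    have hx : x ∈ Submodule.span R (Set.range v) := by rw [hv]; trivial
    refine Submodule.span_induction (fun y hy => ?_) (by simp) (fun y z _ _ hy hz => ?_)
      (fun r y _ hy => ?_) hx
    · obtain ⟨i, rfl⟩ := hy; exact hcv i
    · rw [smul_add]; exact F.add_mem hy hz
    · rw [smul_comm]; exact F.smul_mem _ hy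
  -- the basis of F
  let b : Module.Basis s R F := Module.Basis.span hli
  rw [eq_bot_iff]
  intro x hx
  have hxi : ∀ i, x ∈ P i • (⊤ : Submodule R M) := Submodule.mem_iInf _ |>.1 hx
  -- c • x lies in P i • F for all i
  have hcx : ∀ i, c • x ∈ P i • F := by
    intro i
    have hmap : (P i • (⊤ : Submodule R M)).map (LinearMap.lsmul R M c)
        = P i • (⊤ : Submodule R M).map (LinearMap.lsmul R M c) :=
      Submodule.map_smul'' _ _ _
    have h1 : c • x ∈ (P i • (⊤ : Submodule R M)).map (LinearMap.lsmul R M c) :=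
      ⟨x, hxi i, rfl⟩
    rw [hmap] at h1
    refine Submodule.smul_mono le_rfl ?_ h1
    rintro y ⟨z, -, rfl⟩
    exact hcM z
  set y : F := ⟨c • x, hcM x⟩ with hydef
  have hy : ∀ i, y ∈ P i • (⊤ : Submodule R F) := by
    intro i
    have hmap : (P i • (⊤ : Submodule R F)).map F.subtype = P i • F := by
      rw [Submodule.map_smul'', Submodule.map_top, Submodule.range_subtype]
    have : (y : M) ∈ (P i • (⊤ : Submodule R F)).map F.subtype := by
      rw [hmap]; exact hcx i
    obtain ⟨z, hz, hzval⟩ := this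
    have : z = y := Subtype.ext hzval
    rwa [this] at hz
  have hrep : ∀ i (k : s), b.repr y k ∈ P i := by
    intro i
    refine Submodule.smul_induction_on (hy i) ?_ ?_
    · intro r hr m _ k
      rw [map_smul, Finsupp.smul_apply, smul_eq_mul]
      exact Ideal.mul_mem_right _ _ hr
    · intro z1 z2 h1 h2 k
      rw [map_add, Finsupp.add_apply]
      exact (P i).add_mem (h1 k) (h2 k)
  have hrep0 : b.repr y = 0 := by
    ext k
    have : b.repr y k ∈ ⨅ i, P i := Submodule.mem_iInf _ |>.2 fun i => hrep i k
    rw [hPint] at this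
    simpa using this
  have hy0 : y = 0 := by
    have := congrArg b.repr.symm hrep0
    simpa using this
  have hcx0 : c • x = 0 := by
    have := congrArg (Subtype.val) hy0
    simpa [hydef] using this
  rcases smul_eq_zero.1 hcx0 with h | h
  · exact absurd h hc
  · simp [h]
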